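/- Let Ω ⊆ ℂ be nonempty open and connected, and let f, g ∈ 𝒜(Ω) with f not identically zero. Then f·g′ − f′·g = 0 on Ω if and only if there exists a unique λ ∈ ℂ such that g = λ·f on Ω. -/

import Mathlib

noncomputable section

/-- for `f` not identically zero on connected `Omega`,
`f * g' - f' * g = 0` on `Omega` iff `g` is a unique scalar multiple of `f`. -/
theorem stmt15 (Ω : Set ℂ) (hΩ : IsOpen Ω) (hc : IsConnected Ω)
    (f g : ℂ → ℂ) (hf : DifferentiableOn ℂ f Ω) (hg : DifferentiableOn ℂ g Ω)
    (hf0 : ∃ z ∈ Ω, f z ≠ 0) :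
    (∀ z ∈ Ω, f z * deriv g z - deriv f z * g z = 0) ↔
      ∃! lam : ℂ, ∀ z ∈ Ω, g z = lam * f z := by
  obtain ⟨z₀, hz₀, hfz₀⟩ := hf0
  constructor
  · intro hW
    set lam : ℂ := g z₀ / f z₀ with hlam
    -- find a ball around z₀ where f ≠ 0
    have hcont : ContinuousAt f z₀ :=
      (hf.differentiableAt (hΩ.mem_nhds hz₀)).continuousAt
    have hU : Ω ∩ f ⁻¹' {0}ᶜ ∈ nhds z₀ := by
      apply Filter.inter_mem (hΩ.mem_nhds hz₀)
      exact hcont (isOpen_compl_singleton.mem_nhds hfz₀)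
    obtain ⟨r, hr, hball⟩ := Metric.mem_nhds_iff.mp hU
    have hballΩ : Metric.ball z₀ r ⊆ Ω := fun z hz => (hball hz).1
    have hballf : ∀ z ∈ Metric.ball z₀ r, f z ≠ 0 := fun z hz => (hball hz).2
    -- g/f is constant on the ball
    have hconst : ∀ z ∈ Metric.ball z₀ r, g z / f z = g z₀ / f z₀ := by
      intro z hz
      have hdiff : DifferentiableOn ℂ (fun w => g w / f w) (Metric.ball z₀ r) := by
        apply DifferentiableOn.div (hg.mono hballΩ) (hf.mono hballΩ) hballf
      apply (convex_ball z₀ r).is_const_of_fderivWithin_eq_zero hdiff _ hz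
        (Metric.mem_ball_self hr)
      intro w hw
      have hwΩ : w ∈ Ω := hballΩ hw
      have hfw : DifferentiableAt ℂ f w := hf.differentiableAt (hΩ.mem_nhds hwΩ)
      have hgw : DifferentiableAt ℂ g w := hg.differentiableAt (hΩ.mem_nhds hwΩ)
      have hderiv : HasDerivAt (fun w => g w / f w)
          ((deriv g w * f w - g w * deriv f w) / (f w) ^ 2) w :=
        (hgw.hasDerivAt).div (hfw.hasDerivAt) (hballf w hw)
      have h0 : (deriv g w * f w - g w * deriv f w) / (f w) ^ 2 = 0 := by
        have := hW w hwΩ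
        have hnum : deriv g w * f w - g w * deriv f w = 0 := by linear_combination this
        rw [hnum, zero_div]
      rw [h0] at hderiv
      rw [fderivWithin_eq_fderiv ((Metric.isOpen_ball).uniqueDiffOn w hw)
        (hderiv.differentiableAt)]
      rw [hderiv.hasFDerivAt.fderiv]
      ext
      simp
    -- F := g - lam * f vanishes near z₀, hence on Ω by identity theorem
    have hFan : AnalyticOnNhd ℂ (fun z => g z - lam * f z) Ω := by
      apply DifferentiableOn.analyticOnNhd _ hΩ
      exact hg.sub ((differentiableOn_const lam).mul hf)
    have hF0 : (fun z => g z - lam * f z) =ᶠ[nhds z₀] 0 := by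
      filter_upwards [Metric.ball_mem_nhds z₀ hr] with z hz
      have := hconst z hz
      have hfz : f z ≠ 0 := hballf z hz
      field_simp [hlam] at this ⊢
      simp only [Pi.zero_apply]
      linear_combination (f z₀)⁻¹ * this - g z * mul_inv_cancel₀ hfz₀
    have hEq := hFan.eqOn_zero_of_preconnected_of_eventuallyEq_zero hc.isPreconnected hz₀ hF0
    refine ⟨lam, fun z hz => ?_, fun μ hμ => ?_⟩
    · have := hEq hz
      simp only [Pi.zero_apply] at this
      linear_combination this
    · have h1 := hμ z₀ hz₀
      have h2 : g z₀ = lam * f z₀ := by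
        have := hEq hz₀
        simp only [Pi.zero_apply] at this
        linear_combination this
      exact mul_right_cancel₀ hfz₀ (by rw [← h1, ← h2])
  · rintro ⟨lam, hlam, -⟩
    intro z hz
    have hloc : g =ᶠ[nhds z] fun w => lam * f w := by
      filter_upwards [hΩ.mem_nhds hz] with w hw using hlam w hw
    have hdg : deriv g z = lam * deriv f z := by
      rw [hloc.deriv_eq]
      have hfz : DifferentiableAt ℂ f z := hf.differentiableAt (hΩ.mem_nhds hz)
      rw [deriv_const_mul lam hfz]
    rw [hdg, hlam z hz]
    ring
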